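/- For each even integer n ≥ 2, let t_n denote the unique t ∈ (0,1) with (1−t)^{n−1}(1+t)^n = t^{2n} and let s_n denote the unique s ∈ (0,1) with (1−s)^n(1+s)^{n−1} = s^{2n}. Then, along the subsequence of even integers n = 2, 4, 6, …, the sequence t_n is strictly decreasing and converges to 1/√2, and the sequence s_n is strictly increasing and converges to 1/√2. Equivalently, the zeros x_n^+ = t_n − 1 of D(F_n,x) in (−1,0) decrease to −1 + 1/√2, and the zeros x_n^- = −1 − s_n of D(F_n,x) in (−2,−1) decrease to −1 − 1/√2. -/
import Mathlib


open Filter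

section FriendshipAux

open Set

noncomputable def Qr (t : ℝ) : ℝ := 1 / t ^ 2 - 1
noncomputable def Fp (m : ℕ) (t : ℝ) : ℝ := Qr t ^ m * (1 / t ^ 2 + 1 / t)
noncomputable def Fm (m : ℕ) (t : ℝ) : ℝ := Qr t ^ m * (1 / t ^ 2 - 1 / t)

lemma Qr_pos {t : ℝ} (h : t ∈ Ioo (0:ℝ) 1) : 0 < Qr t := by
  obtain ⟨h0, h1⟩ := h
  have h2 : t ^ 2 < 1 := by nlinarith
  have : 1 < 1 / t ^ 2 := (one_lt_one_div (by positivity) h2)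
  simp only [Qr]; linarith

lemma Qr_anti {a b : ℝ} (ha : 0 < a) (hab : a < b) : Qr b < Qr a := by
  have : 1 / b ^ 2 < 1 / a ^ 2 := by
    apply one_div_lt_one_div_of_lt (by positivity)
    nlinarith
  simp only [Qr]; linarith

lemma Fp_anti {m : ℕ} {a b : ℝ} (ha : a ∈ Ioo (0:ℝ) 1) (hb : b ∈ Ioo (0:ℝ) 1)
    (hm : 1 ≤ m) (hab : a < b) : Fp m b < Fp m a := by
  have hQb := Qr_pos hb
  obtain ⟨ha0, ha1⟩ := ha
  obtain ⟨hb0, hb1⟩ := hb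
  have h1 : Qr b ^ m < Qr a ^ m :=
    pow_lt_pow_left₀ (Qr_anti ha0 hab) hQb.le (by omega)
  have h2 : 1 / b ^ 2 + 1 / b < 1 / a ^ 2 + 1 / a := by
    have hx : 1 / b ^ 2 < 1 / a ^ 2 := by
      apply one_div_lt_one_div_of_lt (by positivity); nlinarith
    have hy := one_div_lt_one_div_of_lt ha0 hab
    linarith
  exact mul_lt_mul'' h1 h2 (by positivity) (by positivity)

lemma Fm_anti {m : ℕ} {a b : ℝ} (ha : a ∈ Ioo (0:ℝ) 1) (hb : b ∈ Ioo (0:ℝ) 1)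
    (hm : 1 ≤ m) (hab : a < b) : Fm m b < Fm m a := by
  have hQb := Qr_pos hb
  obtain ⟨ha0, ha1⟩ := ha
  obtain ⟨hb0, hb1⟩ := hb
  have ha' : a ≠ 0 := ne_of_gt ha0
  have hb' : b ≠ 0 := ne_of_gt hb0
  have h1 : Qr b ^ m < Qr a ^ m :=
    pow_lt_pow_left₀ (Qr_anti ha0 hab) hQb.le (by omega)
  have h2 : 1 / b ^ 2 - 1 / b < 1 / a ^ 2 - 1 / a := by
    have hd : 1 / b < 1 / a := one_div_lt_one_div_of_lt ha0 hab
    have hsum : 1 < 1 / a + 1 / b := by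
      have h3 : 1 < 1 / a := one_lt_one_div ha0 ha1
      have h4 : 0 < 1 / b := by positivity
      linarith
    have key : (1 / a - 1 / b) * 1 < (1 / a - 1 / b) * (1 / a + 1 / b) :=
      mul_lt_mul_of_pos_left hsum (by linarith)
    have expand : (1 / a - 1 / b) * (1 / a + 1 / b) = 1 / a ^ 2 - 1 / b ^ 2 := by
      field_simp; ring
    rw [expand] at key; linarith
  have hpb : 0 < 1 / b ^ 2 - 1 / b := by
    have h5 : 1 / b < 1 / b ^ 2 := by
      apply one_div_lt_one_div_of_lt (by positivity); nlinarith
    linarith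
  exact mul_lt_mul'' h1 h2 (by positivity) hpb.le

lemma lt_of_Fp_lt {m : ℕ} {a b : ℝ} (ha : a ∈ Ioo (0:ℝ) 1) (hb : b ∈ Ioo (0:ℝ) 1)
    (hm : 1 ≤ m) (h : Fp m a < Fp m b) : b < a := by
  rcases lt_trichotomy a b with h' | h' | h'
  · exact absurd (Fp_anti ha hb hm h') (by linarith)
  · subst h'; linarith
  · exact h'

lemma lt_of_Fm_lt {m : ℕ} {a b : ℝ} (ha : a ∈ Ioo (0:ℝ) 1) (hb : b ∈ Ioo (0:ℝ) 1)
    (hm : 1 ≤ m) (h : Fm m a < Fm m b) : b < a := by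
  rcases lt_trichotomy a b with h' | h' | h'
  · exact absurd (Fm_anti ha hb hm h') (by linarith)
  · subst h'; linarith
  · exact h'

lemma Fp_identity {m : ℕ} {t : ℝ} (ht : t ≠ 0) :
    Fp m t * t ^ (2 * m + 2) = (1 - t) ^ m * (1 + t) ^ (m + 1) := by
  have hq : Qr t = (1 - t) * (1 + t) / t ^ 2 := by
    simp only [Qr]; field_simp; ring
  have hp : t ^ (2 * m + 2) = (t ^ 2) ^ m * t ^ 2 := by ring
  simp only [Fp, hq, hp, div_pow, mul_pow]
  field_simp
  ring

lemma Fm_identity {m : ℕ} {t : ℝ} (ht : t ≠ 0) :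
    Fm m t * t ^ (2 * m + 2) = (1 - t) ^ (m + 1) * (1 + t) ^ m := by
  have hq : Qr t = (1 - t) * (1 + t) / t ^ 2 := by
    simp only [Qr]; field_simp; ring
  have hp : t ^ (2 * m + 2) = (t ^ 2) ^ m * t ^ 2 := by ring
  simp only [Fm, hq, hp, div_pow, mul_pow]
  field_simp
  ring

lemma Fp_eq_one {k : ℕ} (hk : 1 ≤ k) {x : ℝ} (hx0 : 0 < x)
    (hE : (1 - x) ^ (2 * k - 1) * (1 + x) ^ (2 * k) = x ^ (4 * k)) :
    Fp (2 * k - 1) x = 1 := by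
  have e1 : 2 * k = (2 * k - 1) + 1 := by omega
  have e2 : 4 * k = 2 * (2 * k - 1) + 2 := by omega
  rw [e1, e2] at hE
  simp only [Nat.add_sub_cancel] at hE
  have hid := Fp_identity (m := 2 * k - 1) (ne_of_gt hx0)
  have hxp : x ^ (2 * (2 * k - 1) + 2) ≠ 0 := pow_ne_zero _ (ne_of_gt hx0)
  have : Fp (2 * k - 1) x * x ^ (2 * (2 * k - 1) + 2) =
      1 * x ^ (2 * (2 * k - 1) + 2) := by rw [hid, hE, one_mul]
  exact mul_right_cancel₀ hxp this

lemma Fm_eq_one {k : ℕ} (hk : 1 ≤ k) {x : ℝ} (hx0 : 0 < x)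
    (hE : (1 - x) ^ (2 * k) * (1 + x) ^ (2 * k - 1) = x ^ (4 * k)) :
    Fm (2 * k - 1) x = 1 := by
  have e1 : 2 * k = (2 * k - 1) + 1 := by omega
  have e2 : 4 * k = 2 * (2 * k - 1) + 2 := by omega
  rw [e1, e2] at hE
  simp only [Nat.add_sub_cancel] at hE
  have hid := Fm_identity (m := 2 * k - 1) (ne_of_gt hx0)
  have hxp : x ^ (2 * (2 * k - 1) + 2) ≠ 0 := pow_ne_zero _ (ne_of_gt hx0)
  have : Fm (2 * k - 1) x * x ^ (2 * (2 * k - 1) + 2) =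
      1 * x ^ (2 * (2 * k - 1) + 2) := by rw [hid, hE, one_mul]
  exact mul_right_cancel₀ hxp this

lemma sqrt2_gt_one : (1 : ℝ) < Real.sqrt 2 := by
  rw [show (1:ℝ) = Real.sqrt 1 by simp]
  exact Real.sqrt_lt_sqrt (by norm_num) (by norm_num)

lemma r_mem : (1 / Real.sqrt 2) ∈ Ioo (0:ℝ) 1 := by
  have h := sqrt2_gt_one
  constructor
  · positivity
  · rw [div_lt_one (by linarith)]; linarith

lemma r_sq : (1 / Real.sqrt 2) ^ 2 = 1 / 2 := by
  rw [div_pow, Real.sq_sqrt (by norm_num : (0:ℝ) ≤ 2)]; norm_num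

lemma Qr_r : Qr (1 / Real.sqrt 2) = 1 := by
  simp only [Qr, r_sq]; norm_num

lemma one_div_r : 1 / (1 / Real.sqrt 2) = Real.sqrt 2 := by
  rw [one_div_one_div]

lemma Fp_r_gt {m : ℕ} : 1 < Fp m (1 / Real.sqrt 2) := by
  have h := sqrt2_gt_one
  simp only [Fp, Qr_r, one_pow, one_mul, r_sq, one_div_r]
  norm_num
  linarith

lemma Fm_r_lt {m : ℕ} : Fm m (1 / Real.sqrt 2) < 1 := by
  have h := sqrt2_gt_one
  have h2 : Real.sqrt 2 < 2 := by
    nlinarith [Real.sq_sqrt (by norm_num : (0:ℝ) ≤ 2), Real.sqrt_nonneg 2]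
  simp only [Fm, Qr_r, one_pow, one_mul, r_sq, one_div_r]
  norm_num
  linarith

end FriendshipAux

/-- Along even integers `n = 2k`, the unique solutions `t_k ∈ (0,1)` of
`(1−t)^(2k−1)(1+t)^(2k) = t^(4k)` are strictly decreasing with limit `1/√2`, and the unique
solutions `s_k ∈ (0,1)` of `(1−s)^(2k)(1+s)^(2k−1) = s^(4k)` are strictly increasing with limit
`1/√2`. Equivalently, `x_k^+ = t_k − 1` decreases to `−1 + 1/√2` and `x_k^- = −1 − s_k`
decreases to `−1 − 1/√2`. -/
theorem friendship_root_parameters_converge (t s : ℕ → ℝ)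
    (ht : ∀ k : ℕ, 1 ≤ k → t k ∈ Set.Ioo (0 : ℝ) 1 ∧
      (1 - t k) ^ (2 * k - 1) * (1 + t k) ^ (2 * k) = (t k) ^ (4 * k))
    (hs : ∀ k : ℕ, 1 ≤ k → s k ∈ Set.Ioo (0 : ℝ) 1 ∧
      (1 - s k) ^ (2 * k) * (1 + s k) ^ (2 * k - 1) = (s k) ^ (4 * k)) :
    (∀ k : ℕ, 1 ≤ k → t (k + 1) < t k) ∧
    Tendsto t atTop (nhds (1 / Real.sqrt 2)) ∧
    (∀ k : ℕ, 1 ≤ k → s k < s (k + 1)) ∧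
    Tendsto s atTop (nhds (1 / Real.sqrt 2)) ∧
    Tendsto (fun k => t k - 1) atTop (nhds (-1 + 1 / Real.sqrt 2)) ∧
    Tendsto (fun k => -1 - s k) atTop (nhds (-1 - 1 / Real.sqrt 2)) := by
  have hr0 : (0:ℝ) < 1 / Real.sqrt 2 := r_mem.1
  have hr1 : (1 / Real.sqrt 2 : ℝ) < 1 := r_mem.2
  -- basic facts for t
  have htmem : ∀ k, 1 ≤ k → t k ∈ Set.Ioo (0:ℝ) 1 := fun k hk => (ht k hk).1
  have htF : ∀ k, 1 ≤ k → Fp (2 * k - 1) (t k) = 1 :=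
    fun k hk => Fp_eq_one hk (htmem k hk).1 (ht k hk).2
  have htgt : ∀ k, 1 ≤ k → 1 / Real.sqrt 2 < t k := by
    intro k hk
    exact lt_of_Fp_lt (m := 2 * k - 1) (htmem k hk) r_mem (by omega)
      (by rw [htF k hk]; exact Fp_r_gt)
  -- basic facts for s
  have hsmem : ∀ k, 1 ≤ k → s k ∈ Set.Ioo (0:ℝ) 1 := fun k hk => (hs k hk).1
  have hsF : ∀ k, 1 ≤ k → Fm (2 * k - 1) (s k) = 1 :=
    fun k hk => Fm_eq_one hk (hsmem k hk).1 (hs k hk).2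
  have hslt : ∀ k, 1 ≤ k → s k < 1 / Real.sqrt 2 := by
    intro k hk
    exact lt_of_Fm_lt (m := 2 * k - 1) r_mem (hsmem k hk) (by omega)
      (by rw [hsF k hk]; exact Fm_r_lt)
  -- monotonicity of t
  have tmono : ∀ k : ℕ, 1 ≤ k → t (k + 1) < t k := by
    intro k hk
    have e : 2 * (k + 1) - 1 = (2 * k - 1) + 2 := by omega
    have hq1 : Qr (t k) < 1 := by
      have := Qr_anti hr0 (htgt k hk); rwa [Qr_r] at this
    have hq0 : 0 < Qr (t k) := Qr_pos (htmem k hk)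
    have h1 : Fp ((2 * k - 1) + 2) (t k) < 1 := by
      have hexp : Fp ((2 * k - 1) + 2) (t k) =
          Qr (t k) ^ 2 * Fp (2 * k - 1) (t k) := by
        simp only [Fp, pow_add]; ring
      rw [hexp, htF k hk, mul_one]
      nlinarith
    have h2 : Fp ((2 * k - 1) + 2) (t (k + 1)) = 1 := by
      rw [← e]; exact htF (k + 1) (by omega)
    exact lt_of_Fp_lt (m := (2 * k - 1) + 2) (htmem k hk) (htmem (k + 1) (by omega)) (by omega)
      (by rw [h2]; exact h1)
  -- monotonicity of s
  have smono : ∀ k : ℕ, 1 ≤ k → s k < s (k + 1) := by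
    intro k hk
    have e : 2 * (k + 1) - 1 = (2 * k - 1) + 2 := by omega
    have hq1 : 1 < Qr (s k) := by
      have := Qr_anti (hsmem k hk).1 (hslt k hk); rwa [Qr_r] at this
    have h1 : 1 < Fm ((2 * k - 1) + 2) (s k) := by
      have hexp : Fm ((2 * k - 1) + 2) (s k) =
          Qr (s k) ^ 2 * Fm (2 * k - 1) (s k) := by
        simp only [Fm, pow_add]; ring
      rw [hexp, hsF k hk, mul_one]
      nlinarith
    have h2 : Fm ((2 * k - 1) + 2) (s (k + 1)) = 1 := by
      rw [← e]; exact hsF (k + 1) (by omega)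
    exact lt_of_Fm_lt (m := (2 * k - 1) + 2) (hsmem (k + 1) (by omega)) (hsmem k hk) (by omega)
      (by rw [h2]; exact h1)
  -- limit of t
  have ttend : Tendsto t atTop (nhds (1 / Real.sqrt 2)) := by
    rw [Metric.tendsto_atTop]
    intro ε hε
    by_cases hcase : 1 ≤ 1 / Real.sqrt 2 + ε
    · refine ⟨1, fun n hn => ?_⟩
      have h1 := htgt n hn
      have h2 := (htmem n hn).2
      rw [Real.dist_eq, abs_lt]
      constructor <;> linarith
    · push_neg at hcase
      have hcm : (1 / Real.sqrt 2 + ε) ∈ Set.Ioo (0:ℝ) 1 := ⟨by linarith, hcase⟩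
      set c := 1 / Real.sqrt 2 + ε with hc
      have hQc0 : 0 < Qr c := Qr_pos hcm
      have hQc1 : Qr c < 1 := by
        have := Qr_anti hr0 (by rw [hc]; linarith : 1 / Real.sqrt 2 < c)
        rwa [Qr_r] at this
      have habs : |Qr c| < 1 := by rw [abs_of_pos hQc0]; exact hQc1
      have hlim : Tendsto (fun n => Qr c ^ n * (1 / c ^ 2 + 1 / c)) atTop (nhds 0) := by
        have := (tendsto_pow_atTop_nhds_zero_of_abs_lt_one habs).mul_const
          (1 / c ^ 2 + 1 / c)
        rwa [zero_mul] at this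
      obtain ⟨N, hN⟩ := eventually_atTop.mp
        (hlim.eventually_lt_const (by norm_num : (0:ℝ) < 1))
      refine ⟨max N 1, fun n hn => ?_⟩
      have hn1 : 1 ≤ n := le_trans (le_max_right N 1) hn
      have hnN : N ≤ 2 * n - 1 := by
        have := le_trans (le_max_left N 1) hn; omega
      have hFc : Fp (2 * n - 1) c < 1 := hN _ hnN
      have hlt : t n < c := lt_of_Fp_lt (m := 2 * n - 1) hcm (htmem n hn1) (by omega)
        (by rw [htF n hn1]; exact hFc)
      have hgt := htgt n hn1
      rw [Real.dist_eq, abs_lt]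
      constructor
      · linarith
      · rw [hc] at hlt; linarith
  -- limit of s
  have stend : Tendsto s atTop (nhds (1 / Real.sqrt 2)) := by
    rw [Metric.tendsto_atTop]
    intro ε hε
    by_cases hcase : 1 / Real.sqrt 2 ≤ ε
    · refine ⟨1, fun n hn => ?_⟩
      have h1 := (hsmem n hn).1
      have h2 := hslt n hn
      rw [Real.dist_eq, abs_lt]
      constructor <;> linarith
    · push_neg at hcase
      have hcm : (1 / Real.sqrt 2 - ε) ∈ Set.Ioo (0:ℝ) 1 := ⟨by linarith, by linarith⟩
      set c := 1 / Real.sqrt 2 - ε with hc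
      have hQc1 : 1 < Qr c := by
        have := Qr_anti hcm.1 (by rw [hc]; linarith : c < 1 / Real.sqrt 2)
        rwa [Qr_r] at this
      have hCpos : 0 < 1 / c ^ 2 - 1 / c := by
        have h5 : 1 / c < 1 / c ^ 2 := by
          apply one_div_lt_one_div_of_lt (pow_pos hcm.1 2)
          nlinarith [hcm.1, hcm.2]
        linarith
      have hlim : Tendsto (fun n => Qr c ^ n * (1 / c ^ 2 - 1 / c)) atTop atTop :=
        (tendsto_pow_atTop_atTop_of_one_lt hQc1).atTop_mul_const hCpos
      obtain ⟨N, hN⟩ := eventually_atTop.mp (hlim.eventually_gt_atTop 1)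
      refine ⟨max N 1, fun n hn => ?_⟩
      have hn1 : 1 ≤ n := le_trans (le_max_right N 1) hn
      have hnN : N ≤ 2 * n - 1 := by
        have := le_trans (le_max_left N 1) hn; omega
      have hFc : 1 < Fm (2 * n - 1) c := hN _ hnN
      have hlt : c < s n := lt_of_Fm_lt (m := 2 * n - 1) (hsmem n hn1) hcm (by omega)
        (by rw [hsF n hn1]; exact hFc)
      have hgt := hslt n hn1
      rw [Real.dist_eq, abs_lt]
      constructor
      · rw [hc] at hlt; linarith
      · linarith
  refine ⟨tmono, ttend, smono, stend, ?_, ?_⟩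
  · have h := ttend.sub_const 1
    have e : -1 + 1 / Real.sqrt 2 = 1 / Real.sqrt 2 - 1 := by ring
    rw [e]; exact h
  · exact tendsto_const_nhds.sub stend
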